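/- Let F_{3,2} : ℝ^5 → ℝ^5 be given by F_{3,2}(x,y,u1,u2,u3) = (x³+y²+u1·x+u2·y+u3·x², x·y, u1, u2, u3). Then for every point q = (x,y,u1,u2,u3) ∈ ℝ^5, the derivative of F_{3,2} at q applied to ξ_3(q) = (−(1/3)x²−(1/9)u3·x, (1/3)xy, x³+y²+u1·x+u2·y+u3·x²+(1/9)u1·u3, −(5/3)xy, −(2/3)u1+(2/9)u3²) equals η_3(F_{3,2}(q)), where η_3(X,Y,U1,U2,U3) = ((4/3)U2·Y, −(1/9)U3·Y, X+(1/9)U1·U3, −(5/3)Y, −(2/3)U1+(2/9)U3²). In particular η_3 is liftable over F_{3,2}. -/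

import Mathlib

/-- The stable map `F₃₂` of discrete algebra type `B_{3,2}`. -/
noncomputable def F32 : ℝ × ℝ × ℝ × ℝ × ℝ → ℝ × ℝ × ℝ × ℝ × ℝ :=
  fun (x, y, u1, u2, u3) =>
    (x^3 + y^2 + u1*x + u2*y + u3*x^2, x*y, u1, u2, u3)

/-- The vector field `η₃` on the target of `F₃₂`. -/
noncomputable def eta3 : ℝ × ℝ × ℝ × ℝ × ℝ → ℝ × ℝ × ℝ × ℝ × ℝ :=
  fun (X, Y, U1, U2, U3) =>
    ((4/3)*U2*Y, -(1/9)*U3*Y, X + (1/9)*U1*U3, -(5/3)*Y, -(2/3)*U1 + (2/9)*U3^2)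

/-- The lowerable vector field `ξ₃` on the source of `F₃₂`. -/
noncomputable def xi3 : ℝ × ℝ × ℝ × ℝ × ℝ → ℝ × ℝ × ℝ × ℝ × ℝ :=
  fun (x, y, u1, u2, u3) =>
    (-(1/3)*x^2 - (1/9)*u3*x, (1/3)*x*y,
     x^3 + y^2 + u1*x + u2*y + u3*x^2 + (1/9)*u1*u3,
     -(5/3)*x*y, -(2/3)*u1 + (2/9)*u3^2)

/-- `η₃` is liftable over `F₃₂` via `ξ₃`:
for every `q`, `d(F₃₂)_q (ξ₃ q) = η₃ (F₃₂ q)`. -/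
theorem eta3_liftable_over_F32 :
    ∀ q : ℝ × ℝ × ℝ × ℝ × ℝ, fderiv ℝ F32 q (xi3 q) = eta3 (F32 q) := by
  have hF : F32 = fun q : ℝ × ℝ × ℝ × ℝ × ℝ =>
      (q.1*q.1*q.1 + q.2.1*q.2.1 + q.2.2.1*q.1 + q.2.2.2.1*q.2.1 + q.2.2.2.2*(q.1*q.1),
       q.1*q.2.1, q.2.2.1, q.2.2.2.1, q.2.2.2.2) := by
    funext ⟨x, y, u1, u2, u3⟩
    simp only [F32, Prod.mk.injEq]
    norm_num
    ring
  rintro ⟨x, y, u1, u2, u3⟩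
  set q : ℝ × ℝ × ℝ × ℝ × ℝ := (x, y, u1, u2, u3) with hq
  have h1 : HasFDerivAt (fun p : ℝ × ℝ × ℝ × ℝ × ℝ => p.1)
      (ContinuousLinearMap.fst ℝ ℝ (ℝ × ℝ × ℝ × ℝ)) q := hasFDerivAt_fst
  have h2 : HasFDerivAt (fun p : ℝ × ℝ × ℝ × ℝ × ℝ => p.2.1)
      ((ContinuousLinearMap.fst ℝ ℝ (ℝ × ℝ × ℝ)).comp
        (ContinuousLinearMap.snd ℝ ℝ (ℝ × ℝ × ℝ × ℝ))) q :=
    (hasFDerivAt_fst (p := q.2)).comp q hasFDerivAt_snd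
  have h3 : HasFDerivAt (fun p : ℝ × ℝ × ℝ × ℝ × ℝ => p.2.2.1)
      ((ContinuousLinearMap.fst ℝ ℝ (ℝ × ℝ)).comp
        ((ContinuousLinearMap.snd ℝ ℝ (ℝ × ℝ × ℝ)).comp
          (ContinuousLinearMap.snd ℝ ℝ (ℝ × ℝ × ℝ × ℝ)))) q :=
    (hasFDerivAt_fst (p := q.2.2)).comp q
      ((hasFDerivAt_snd (p := q.2)).comp q hasFDerivAt_snd)
  have h4 : HasFDerivAt (fun p : ℝ × ℝ × ℝ × ℝ × ℝ => p.2.2.2.1)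
      ((ContinuousLinearMap.fst ℝ ℝ ℝ).comp
        ((ContinuousLinearMap.snd ℝ ℝ (ℝ × ℝ)).comp
          ((ContinuousLinearMap.snd ℝ ℝ (ℝ × ℝ × ℝ)).comp
            (ContinuousLinearMap.snd ℝ ℝ (ℝ × ℝ × ℝ × ℝ))))) q :=
    (hasFDerivAt_fst (p := q.2.2.2)).comp q
      ((hasFDerivAt_snd (p := q.2.2)).comp q
        ((hasFDerivAt_snd (p := q.2)).comp q hasFDerivAt_snd))
  have h5 : HasFDerivAt (fun p : ℝ × ℝ × ℝ × ℝ × ℝ => p.2.2.2.2)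
      ((ContinuousLinearMap.snd ℝ ℝ ℝ).comp
        ((ContinuousLinearMap.snd ℝ ℝ (ℝ × ℝ)).comp
          ((ContinuousLinearMap.snd ℝ ℝ (ℝ × ℝ × ℝ)).comp
            (ContinuousLinearMap.snd ℝ ℝ (ℝ × ℝ × ℝ × ℝ))))) q :=
    (hasFDerivAt_snd (p := q.2.2.2)).comp q
      ((hasFDerivAt_snd (p := q.2.2)).comp q
        ((hasFDerivAt_snd (p := q.2)).comp q hasFDerivAt_snd))
  have hf1 : HasFDerivAt (fun p : ℝ × ℝ × ℝ × ℝ × ℝ =>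
      p.1*p.1*p.1 + p.2.1*p.2.1 + p.2.2.1*p.1 + p.2.2.2.1*p.2.1 + p.2.2.2.2*(p.1*p.1)) _ q :=
    (((((h1.mul h1).mul h1).add (h2.mul h2)).add (h3.mul h1)).add (h4.mul h2)).add
      (h5.mul (h1.mul h1))
  have hf2 : HasFDerivAt (fun p : ℝ × ℝ × ℝ × ℝ × ℝ => p.1 * p.2.1) _ q := h1.mul h2
  rw [hF, (hf1.prodMk (hf2.prodMk (h3.prodMk (h4.prodMk h5)))).fderiv]
  simp [xi3, eta3, F32, hq]
  refine ⟨by ring, by ring, ?_⟩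
  ring_nf
  exact ⟨trivial, trivial⟩
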